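/- Let λ be a labeling of G_oct such that every face satisfies the strict triangle inequality. Then λ is flexible, i.e. there are infinitely many pairwise non-congruent realizations in ℝ³ compatible with λ, if and only if there are infinitely many pairwise non-congruent compatible spherical realizations, where two spherical realizations q, q' : E_oct → ℝ³ are congruent if q' = A ∘ q for some orthogonal linear map A of ℝ³. -/

import Mathlib

open EuclideanGeometry

noncomputable section

/-- Points of Euclidean 3-space. -/
abbrev Pt : Type := EuclideanSpace ℝ (Fin 3)

/-- The vertex set of the octahedral graph. -/
def octV : Finset ℕ := {1, 2, 3, 4, 5, 6}

/-- `{i, j}` is an edge of the octahedral graph `G_oct`. -/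
def IsOctEdge (i j : ℕ) : Prop :=
  i ∈ octV ∧ j ∈ octV ∧ i ≠ j ∧
    ({i, j} : Finset ℕ) ≠ {1, 2} ∧ ({i, j} : Finset ℕ) ≠ {3, 4} ∧ ({i, j} : Finset ℕ) ≠ {5, 6}

/-- `{i, j, k}` is a face of the octahedron. -/
def IsOctFace (i j k : ℕ) : Prop :=
  ({i, j, k} : Finset ℕ) ∈
    ({ {1,3,5}, {1,3,6}, {1,4,5}, {1,4,6}, {2,3,5}, {2,3,6}, {2,4,5}, {2,4,6} } :
      Finset (Finset ℕ))

/-- A realization `ρ` is compatible with the labeling `lam`. -/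
def Compatible (lam : Sym2 ℕ → ℝ) (ρ : ℕ → Pt) : Prop :=
  ∀ i j, IsOctEdge i j → dist (ρ i) (ρ j) = lam s(i, j)

/-- Two realizations are congruent if they differ by an isometry of `ℝ³`. -/
def OctCongruent (ρ₁ ρ₂ : ℕ → Pt) : Prop :=
  ∃ σ : Pt ≃ᵢ Pt, ∀ i ∈ octV, ρ₁ i = σ (ρ₂ i)

/-- The labeling `lam` is flexible in `ℝ³`. -/
def Flexible (lam : Sym2 ℕ → ℝ) : Prop :=
  ∃ S : Set (ℕ → Pt), S.Infinite ∧ (∀ ρ ∈ S, Compatible lam ρ) ∧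
    ∀ ρ₁ ∈ S, ∀ ρ₂ ∈ S, ρ₁ ≠ ρ₂ → ¬ OctCongruent ρ₁ ρ₂

/-- The fixed orientation of the edges of `G_oct`. -/
def dOrient : List (ℕ × ℕ) :=
  [(1,6), (1,3), (4,1), (5,1), (6,3), (4,6), (6,2), (3,5), (3,2), (5,4), (2,4), (2,5)]

/-- The signed length `ℓ_{ij}`: it equals `λ{i,j}` if `(i,j)` belongs to the fixed
orientation and `-λ{i,j}` otherwise. -/
def sgnLen (lam : Sym2 ℕ → ℝ) (i j : ℕ) : ℝ :=
  if (i, j) ∈ dOrient then lam s(i, j) else - lam s(i, j)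

/-- The edges of `G_oct`, i.e. the set `E_oct`, as a subtype of `Sym2 ℕ`. -/
abbrev OctE : Type := {e : Sym2 ℕ // ∃ i j, IsOctEdge i j ∧ e = s(i, j)}

/-- `q : E_oct → ℝ³` is a compatible spherical realization for the labeling `lam`. -/
def SphCompatible (lam : Sym2 ℕ → ℝ) (q : OctE → Pt) : Prop :=
  (∀ e : OctE, ‖q e‖ = 1) ∧
  ∀ (e f : OctE) (i j m : ℕ), IsOctFace i j m →
    (e : Sym2 ℕ) = s(i, j) → (f : Sym2 ℕ) = s(m, j) →
    sgnLen lam i j * sgnLen lam m j * (inner ℝ (q e) (q f) : ℝ) =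
      (lam s(i, j) ^ 2 + lam s(m, j) ^ 2 - lam s(i, m) ^ 2) / 2

/-- Two spherical realizations are congruent if they differ by an orthogonal linear
map of `ℝ³`. -/
def SphCongruent (q₁ q₂ : OctE → Pt) : Prop :=
  ∃ A : Pt ≃ₗᵢ[ℝ] Pt, ∀ e, q₂ e = A (q₁ e)

-- ==== auxiliary lemmas ====

instance (i j : ℕ) : Decidable (IsOctEdge i j) := by unfold IsOctEdge; infer_instance
instance (i j k : ℕ) : Decidable (IsOctFace i j k) := by unfold IsOctFace; infer_instance

lemma mem_dOrient_iff {i j : ℕ} (h : IsOctEdge i j) : (j,i) ∈ dOrient ↔ (i,j) ∉ dOrient := by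
  obtain ⟨hi, hj, h3, h4, h5, h6⟩ := h
  fin_cases hi <;> fin_cases hj <;> revert h3 h4 h5 h6 <;> decide

lemma sgn_swap (lam : Sym2 ℕ → ℝ) {i j : ℕ} (h : IsOctEdge i j) :
    sgnLen lam j i = - sgnLen lam i j := by
  have hs : s(j, i) = s(i, j) := Sym2.eq_swap
  by_cases hm : (i, j) ∈ dOrient
  · have hm' : (j, i) ∉ dOrient := by simp [mem_dOrient_iff h, hm]
    simp [sgnLen, hm, hm', hs]
  · have hm' := (mem_dOrient_iff h).2 hm
    simp [sgnLen, hm, hm', hs]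

lemma sgn_sq (lam : Sym2 ℕ → ℝ) (i j : ℕ) : sgnLen lam i j ^ 2 = lam s(i, j) ^ 2 := by
  unfold sgnLen; split <;> ring

lemma abs_sgn {lam : Sym2 ℕ → ℝ} {i j : ℕ} (h : 0 < lam s(i, j)) :
    |sgnLen lam i j| = lam s(i, j) := by
  unfold sgnLen; split
  · exact abs_of_pos h
  · rw [abs_neg]; exact abs_of_pos h

lemma sgn_ne {lam : Sym2 ℕ → ℝ} {i j : ℕ} (h : 0 < lam s(i, j)) : sgnLen lam i j ≠ 0 := by
  intro hc
  have := abs_sgn h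
  rw [hc, abs_zero] at this
  exact absurd this.symm (ne_of_gt h)

lemma edge_symm {i j : ℕ} (h : IsOctEdge i j) : IsOctEdge j i := by
  obtain ⟨h1, h2, h3, h4, h5, h6⟩ := h
  exact ⟨h2, h1, h3.symm, by rwa [Finset.pair_comm], by rwa [Finset.pair_comm],
    by rwa [Finset.pair_comm]⟩

lemma face_perm1 {i j m : ℕ} (h : IsOctFace i j m) : IsOctFace j i m := by
  have e : ({j, i, m} : Finset ℕ) = {i, j, m} := Finset.insert_comm j i {m}
  unfold IsOctFace at h ⊢
  rwa [e]

lemma face_perm2 {i j m : ℕ} (h : IsOctFace i j m) : IsOctFace i m j := by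
  have e : ({i, m, j} : Finset ℕ) = {i, j, m} := congrArg (insert i) (Finset.pair_comm m j)
  unfold IsOctFace at h ⊢
  rwa [e]

lemma face_edge {i j m : ℕ} (h : IsOctFace i j m) : IsOctEdge i j := by
  unfold IsOctFace at h
  simp only [Finset.mem_insert, Finset.mem_singleton] at h
  have hi : i ∈ ({i, j, m} : Finset ℕ) := by simp
  have hj : j ∈ ({i, j, m} : Finset ℕ) := by simp
  have hm : m ∈ ({i, j, m} : Finset ℕ) := by simp
  rcases h with h|h|h|h|h|h|h|h <;> rw [h] at hi hj hm <;>
    fin_cases hi <;> fin_cases hj <;> fin_cases hm <;>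
      first
        | exact absurd h (by decide)
        | decide

lemma face_edge_mj {i j m : ℕ} (h : IsOctFace i j m) : IsOctEdge m j :=
  face_edge (face_perm1 (face_perm2 (face_perm1 h)))

lemma face_edge_im {i j m : ℕ} (h : IsOctFace i j m) : IsOctEdge i m :=
  face_edge (face_perm2 h)

-- the canonical element of OctE attached to an edge
def oe (i j : ℕ) (h : IsOctEdge i j) : OctE := ⟨s(i, j), i, j, h, rfl⟩

lemma oe_swap {i j : ℕ} (h : IsOctEdge i j) (h' : IsOctEdge j i) :
    oe j i h' = oe i j h := Subtype.ext Sym2.eq_swap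

-- ==== forward direction: from realizations to spherical realizations ====

def qOf (lam : Sym2 ℕ → ℝ) (ρ : ℕ → Pt) (e : OctE) : Pt :=
  (sgnLen lam e.2.choose e.2.choose_spec.choose)⁻¹ •
    (ρ e.2.choose_spec.choose - ρ e.2.choose)

lemma qval_eq (lam : Sym2 ℕ → ℝ) (ρ : ℕ → Pt) {a b i j : ℕ}
    (hij : IsOctEdge i j) (h : s(a, b) = s(i, j)) :
    (sgnLen lam a b)⁻¹ • (ρ b - ρ a) = (sgnLen lam i j)⁻¹ • (ρ j - ρ i) := by
  rcases Sym2.eq_iff.mp h with ⟨ha, hb⟩ | ⟨ha, hb⟩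
  · rw [ha, hb]
  · rw [ha, hb, sgn_swap lam hij, inv_neg, neg_smul, ← smul_neg, neg_sub]

lemma qOf_spec (lam : Sym2 ℕ → ℝ) (ρ : ℕ → Pt) (e : OctE) {i j : ℕ}
    (hij : IsOctEdge i j) (he : (e : Sym2 ℕ) = s(i, j)) :
    qOf lam ρ e = (sgnLen lam i j)⁻¹ • (ρ j - ρ i) := by
  have h2 := e.2.choose_spec.choose_spec
  exact qval_eq lam ρ hij (h2.2.symm.trans he)

lemma law_cos {lam : Sym2 ℕ → ℝ} {ρ : ℕ → Pt} (hc : Compatible lam ρ)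
    {i j m : ℕ} (hface : IsOctFace i j m) :
    (inner ℝ (ρ j - ρ i) (ρ j - ρ m) : ℝ) =
      (lam s(i, j) ^ 2 + lam s(m, j) ^ 2 - lam s(i, m) ^ 2) / 2 := by
  have hij := face_edge hface
  have hmj := face_edge_mj hface
  have him := face_edge_im hface
  have hx : ‖ρ j - ρ i‖ = lam s(i, j) := by
    rw [← dist_eq_norm, dist_comm]; exact hc i j hij
  have hy : ‖ρ j - ρ m‖ = lam s(m, j) := by
    rw [← dist_eq_norm, dist_comm]; exact hc m j hmj
  have hxy : ‖(ρ j - ρ i) - (ρ j - ρ m)‖ = lam s(i, m) := by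
    rw [show (ρ j - ρ i) - (ρ j - ρ m) = ρ m - ρ i by abel, ← dist_eq_norm, dist_comm]
    exact hc i m him
  have key := norm_sub_sq_real (ρ j - ρ i) (ρ j - ρ m)
  rw [hx, hy, hxy] at key
  linarith

lemma qOf_sph {lam : Sym2 ℕ → ℝ} {ρ : ℕ → Pt}
    (hpos : ∀ i j, IsOctEdge i j → 0 < lam s(i, j)) (hc : Compatible lam ρ) :
    SphCompatible lam (qOf lam ρ) := by
  constructor
  · intro e
    obtain ⟨i, j, hij, he⟩ := e.2
    rw [qOf_spec lam ρ e hij he, norm_smul, ← dist_eq_norm, dist_comm, hc i j hij,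
      norm_inv, Real.norm_eq_abs, abs_sgn (hpos i j hij)]
    exact inv_mul_cancel₀ (ne_of_gt (hpos i j hij))
  · intro e f i j m hface he hf
    have hij := face_edge hface
    have hmj := face_edge_mj hface
    rw [qOf_spec lam ρ e hij he, qOf_spec lam ρ f hmj hf,
      real_inner_smul_left, real_inner_smul_right, law_cos hc hface]
    have h1 := sgn_ne (hpos i j hij)
    have h2 := sgn_ne (hpos m j hmj)
    field_simp

-- ==== congruence builders ====

lemma congr_of_edges (A : Pt ≃ₗᵢ[ℝ] Pt) (ρ₁ ρ₂ : ℕ → Pt)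
    (h : ∀ i j, IsOctEdge i j → ρ₂ j - ρ₂ i = A (ρ₁ j - ρ₁ i)) :
    ∀ i ∈ octV, ρ₂ i = A (ρ₁ i) + (ρ₂ 1 - A (ρ₁ 1)) := by
  have key : ∀ i, IsOctEdge 1 i → ρ₂ i = A (ρ₁ i) + (ρ₂ 1 - A (ρ₁ 1)) := by
    intro i hi
    have h' := h 1 i hi
    rw [map_sub, sub_eq_iff_eq_add] at h'
    rw [h']; abel
  intro i hi
  fin_cases hi
  · abel
  · have h3 := key 3 (by decide)
    have h32 := h 3 2 (by decide)
    rw [map_sub, sub_eq_iff_eq_add] at h32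
    rw [h32, h3]; abel
  · exact key 3 (by decide)
  · exact key 4 (by decide)
  · exact key 5 (by decide)
  · exact key 6 (by decide)

lemma congruent_of_linear (A : Pt ≃ₗᵢ[ℝ] Pt) (ρ₁ ρ₂ : ℕ → Pt)
    (h : ∀ i j, IsOctEdge i j → ρ₂ j - ρ₂ i = A (ρ₁ j - ρ₁ i)) : OctCongruent ρ₁ ρ₂ := by
  refine ⟨(A.symm.toIsometryEquiv).trans
    (IsometryEquiv.addLeft (ρ₁ 1 - A.symm (ρ₂ 1))), fun i hi => ?_⟩
  have h2 := congr_of_edges A ρ₁ ρ₂ h i hi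
  simp only [IsometryEquiv.trans_apply, LinearIsometryEquiv.coe_toIsometryEquiv,
    IsometryEquiv.addLeft_apply]
  rw [h2]
  simp only [map_add, map_sub, LinearIsometryEquiv.symm_apply_apply]
  abel

-- ==== backward direction: from spherical realizations to realizations ====

def uvec (lam : Sym2 ℕ → ℝ) (q : OctE → Pt) (i j : ℕ) (h : IsOctEdge i j) : Pt :=
  sgnLen lam i j • q (oe i j h)

lemma uvec_swap (lam : Sym2 ℕ → ℝ) (q : OctE → Pt) {i j : ℕ}
    (h' : IsOctEdge i j) (h : IsOctEdge j i) :
    uvec lam q j i h = - uvec lam q i j h' := by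
  unfold uvec
  rw [oe_swap h' h, sgn_swap lam h', neg_smul]

lemma face_closure {lam : Sym2 ℕ → ℝ} {q : OctE → Pt} (hq : SphCompatible lam q)
    {i j m : ℕ} (hf : IsOctFace i j m)
    (h1 : IsOctEdge i j) (h2 : IsOctEdge j m) (h3 : IsOctEdge m i) :
    uvec lam q i j h1 + uvec lam q j m h2 + uvec lam q m i h3 = 0 := by
  unfold uvec
  set a := q (oe i j h1) with ha
  set b := q (oe j m h2) with hb
  set c := q (oe m i h3) with hc
  have e1 := hq.2 (oe i j h1) (oe m j (edge_symm h2)) i j m hf rfl rfl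
  rw [show q (oe m j (edge_symm h2)) = b by rw [hb, oe_swap h2 (edge_symm h2)],
    sgn_swap lam h2, show s(m, j) = s(j, m) from Sym2.eq_swap] at e1
  have e2 := hq.2 (oe j i (edge_symm h1)) (oe m i h3) j i m (face_perm1 hf) rfl rfl
  rw [show q (oe j i (edge_symm h1)) = a by rw [ha, oe_swap h1 (edge_symm h1)],
    sgn_swap lam h1, show s(j, i) = s(i, j) from Sym2.eq_swap,
    show s(m, i) = s(i, m) from Sym2.eq_swap, show s(j, m) = s(j, m) from rfl] at e2
  have e3 := hq.2 (oe i m (edge_symm h3)) (oe j m h2) i m j (face_perm2 hf) rfl rfl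
  rw [show q (oe i m (edge_symm h3)) = c by rw [hc, oe_swap h3 (edge_symm h3)],
    sgn_swap lam h3] at e3
  have n1 : (inner ℝ a a : ℝ) = 1 := by
    rw [real_inner_self_eq_norm_mul_norm, hq.1 (oe i j h1)]; norm_num
  have n2 : (inner ℝ b b : ℝ) = 1 := by
    rw [real_inner_self_eq_norm_mul_norm, hq.1 (oe j m h2)]; norm_num
  have n3 : (inner ℝ c c : ℝ) = 1 := by
    rw [real_inner_self_eq_norm_mul_norm, hq.1 (oe m i h3)]; norm_num
  have hba : (inner ℝ b a : ℝ) = inner ℝ a b := real_inner_comm a b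
  have hca : (inner ℝ c a : ℝ) = inner ℝ a c := real_inner_comm a c
  have hbc : (inner ℝ b c : ℝ) = inner ℝ c b := real_inner_comm c b
  have q1 := sgn_sq lam i j
  have q2 := sgn_sq lam j m
  have q3 : sgnLen lam m i ^ 2 = lam s(i, m) ^ 2 := by
    rw [sgn_sq lam m i, show s(m, i) = s(i, m) from Sym2.eq_swap]
  have key : (inner ℝ (sgnLen lam i j • a + sgnLen lam j m • b + sgnLen lam m i • c)
      (sgnLen lam i j • a + sgnLen lam j m • b + sgnLen lam m i • c) : ℝ) = 0 := by
    simp only [inner_add_left, inner_add_right, real_inner_smul_left, real_inner_smul_right]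
    linear_combination (sgnLen lam i j)^2 * n1 + (sgnLen lam j m)^2 * n2 +
      (sgnLen lam m i)^2 * n3 + (sgnLen lam i j * sgnLen lam j m) * hba +
      (sgnLen lam i j * sgnLen lam m i) * hca + (sgnLen lam j m * sgnLen lam m i) * hbc -
      2 * e1 - 2 * e2 - 2 * e3 + q1 + q2 + q3
  exact inner_self_eq_zero.mp key


def rOf (lam : Sym2 ℕ → ℝ) (q : OctE → Pt) : ℕ → Pt := fun n =>
  if n = 2 then uvec lam q 1 3 (by decide) + uvec lam q 3 2 (by decide)
  else if n = 3 then uvec lam q 1 3 (by decide)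
  else if n = 4 then - uvec lam q 4 1 (by decide)
  else if n = 5 then - uvec lam q 5 1 (by decide)
  else if n = 6 then uvec lam q 1 6 (by decide)
  else 0

lemma rOf_edge {lam : Sym2 ℕ → ℝ} {q : OctE → Pt} (hq : SphCompatible lam q)
    {i j : ℕ} (h : IsOctEdge i j) :
    rOf lam q j - rOf lam q i = uvec lam q i j h := by
  have CA := face_closure hq (show IsOctFace 1 6 3 by decide) (by decide) (by decide) (by decide)
  have CB := face_closure hq (show IsOctFace 4 1 6 by decide) (by decide) (by decide) (by decide)
  have CC := face_closure hq (show IsOctFace 6 2 3 by decide) (by decide) (by decide) (by decide)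
  have CD := face_closure hq (show IsOctFace 3 5 1 by decide) (by decide) (by decide) (by decide)
  have CE := face_closure hq (show IsOctFace 5 4 1 by decide) (by decide) (by decide) (by decide)
  have CF := face_closure hq (show IsOctFace 2 4 6 by decide) (by decide) (by decide) (by decide)
  have CG := face_closure hq (show IsOctFace 2 5 3 by decide) (by decide) (by decide) (by decide)
  have S31 := uvec_swap lam q (show IsOctEdge 1 3 by decide) (by decide)
  have S64 := uvec_swap lam q (show IsOctEdge 4 6 by decide) (by decide)
  have S23 := uvec_swap lam q (show IsOctEdge 3 2 by decide) (by decide)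
  have S36 := uvec_swap lam q (show IsOctEdge 6 3 by decide) (by decide)
  have S15 := uvec_swap lam q (show IsOctEdge 5 1 by decide) (by decide)
  have S53 := uvec_swap lam q (show IsOctEdge 3 5 by decide) (by decide)
  have hi := h.1
  have hj := h.2.1
  fin_cases hi <;> fin_cases hj
  · exact absurd h (by decide)
  · exact absurd h (by decide)
  · norm_num [rOf]
  · have SW := uvec_swap lam q (edge_symm h) h
    norm_num [rOf]
    linear_combination (norm := module) -SW
  · have SW := uvec_swap lam q (edge_symm h) h
    norm_num [rOf]
    linear_combination (norm := module) -SW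
  · norm_num [rOf]
  · exact absurd h (by decide)
  · exact absurd h (by decide)
  · have SW := uvec_swap lam q (edge_symm h) h
    norm_num [rOf]
    linear_combination (norm := module) -SW
  · norm_num [rOf]
    linear_combination (norm := module) -CF - CB + S64 + CC - S23 - S36 + CA - S31
  · norm_num [rOf]
    linear_combination (norm := module) -CG + S53 - CD
  · have SW := uvec_swap lam q (edge_symm h) h
    norm_num [rOf]
    linear_combination (norm := module) CC - S23 - S36 + CA - S31 - SW
  · have SW := uvec_swap lam q (edge_symm h) h
    norm_num [rOf]
    linear_combination (norm := module) -SW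
  · norm_num [rOf]
  · exact absurd h (by decide)
  · exact absurd h (by decide)
  · norm_num [rOf]
    linear_combination (norm := module) -CD
  · have SW := uvec_swap lam q (edge_symm h) h
    norm_num [rOf]
    linear_combination (norm := module) CA - S31 - SW
  · norm_num [rOf]
  · have SW := uvec_swap lam q (edge_symm h) h
    norm_num [rOf]
    linear_combination (norm := module) CF + CB - S64 - CC + S23 + S36 - CA + S31 - SW
  · exact absurd h (by decide)
  · exact absurd h (by decide)
  · have SW := uvec_swap lam q (edge_symm h) h
    norm_num [rOf]
    linear_combination (norm := module) CE - S15 - SW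
  · norm_num [rOf]
    linear_combination (norm := module) CB - S64
  · norm_num [rOf]
  · have SW := uvec_swap lam q (edge_symm h) h
    norm_num [rOf]
    linear_combination (norm := module) CG - S53 + CD - SW
  · have SW := uvec_swap lam q (edge_symm h) h
    norm_num [rOf]
    linear_combination (norm := module) CD - SW
  · norm_num [rOf]
    linear_combination (norm := module) -CE + S15
  · exact absurd h (by decide)
  · exact absurd h (by decide)
  · have SW := uvec_swap lam q (edge_symm h) h
    norm_num [rOf]
    linear_combination (norm := module) -SW
  · norm_num [rOf]
    linear_combination (norm := module) -CC + S23 + S36 - CA + S31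
  · norm_num [rOf]
    linear_combination (norm := module) -CA + S31
  · have SW := uvec_swap lam q (edge_symm h) h
    norm_num [rOf]
    linear_combination (norm := module) -CB + S64 - SW
  · exact absurd h (by decide)
  · exact absurd h (by decide)

lemma q_eq {lam : Sym2 ℕ → ℝ} {q : OctE → Pt} (hq : SphCompatible lam q)
    (e : OctE) {i j : ℕ} (hij : IsOctEdge i j) (he : (e : Sym2 ℕ) = s(i, j))
    (h0 : 0 < lam s(i, j)) :
    q e = (sgnLen lam i j)⁻¹ • (rOf lam q j - rOf lam q i) := by
  rw [rOf_edge hq hij]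
  unfold uvec
  rw [smul_smul, inv_mul_cancel₀ (sgn_ne h0), one_smul,
    show oe i j hij = e from Subtype.ext he.symm]

lemma isometry_sub (f : Pt ≃ᵢ Pt) (x y : Pt) :
    f x - f y = f.toRealAffineIsometryEquiv.linearIsometryEquiv (x - y) := by
  have := f.toRealAffineIsometryEquiv.map_vsub x y
  rw [IsometryEquiv.coeFn_toRealAffineIsometryEquiv] at this
  simpa using this.symm


/-- A labeling of `G_oct` whose faces satisfy the strict triangle inequality is
flexible in `ℝ³` if and only if it admits infinitely many pairwise non-congruent
compatible spherical realizations. -/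
theorem flexible_iff_sphere_flexible
    (lam : Sym2 ℕ → ℝ)
    (hpos : ∀ i j, IsOctEdge i j → 0 < lam s(i, j))
    (htri : ∀ i j m, IsOctFace i j m → lam s(i, m) < lam s(i, j) + lam s(j, m)) :
    Flexible lam ↔
      ∃ Q : Set (OctE → Pt), Q.Infinite ∧ (∀ q ∈ Q, SphCompatible lam q) ∧
        ∀ q₁ ∈ Q, ∀ q₂ ∈ Q, q₁ ≠ q₂ → ¬ SphCongruent q₁ q₂ := by
  constructor
  · rintro ⟨S, hSinf, hScomp, hSnc⟩
    refine ⟨(fun ρ => qOf lam ρ) '' S, ?_, ?_, ?_⟩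
    · refine hSinf.image ?_
      intro ρ₁ h₁ ρ₂ h₂ heq
      by_contra hne
      apply hSnc ρ₁ h₁ ρ₂ h₂ hne
      apply congruent_of_linear (LinearIsometryEquiv.refl ℝ Pt)
      intro i j hij
      have h' : qOf lam ρ₁ (oe i j hij) = qOf lam ρ₂ (oe i j hij) := congrFun heq _
      rw [qOf_spec lam ρ₁ (oe i j hij) hij rfl, qOf_spec lam ρ₂ (oe i j hij) hij rfl] at h'
      have := smul_right_injective Pt (inv_ne_zero (sgn_ne (hpos i j hij))) h'
      simpa using this.symm
    · rintro q ⟨ρ, hρ, rfl⟩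
      exact qOf_sph hpos (hScomp ρ hρ)
    · rintro q₁ ⟨ρ₁, hρ₁, rfl⟩ q₂ ⟨ρ₂, hρ₂, rfl⟩ hne ⟨A, hA⟩
      have hρne : ρ₁ ≠ ρ₂ := fun hh => hne (by rw [hh])
      apply hSnc ρ₁ hρ₁ ρ₂ hρ₂ hρne
      apply congruent_of_linear A
      intro i j hij
      have h' : qOf lam ρ₂ (oe i j hij) = A (qOf lam ρ₁ (oe i j hij)) := hA _
      rw [qOf_spec lam ρ₁ (oe i j hij) hij rfl, qOf_spec lam ρ₂ (oe i j hij) hij rfl,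
        map_smul] at h'
      exact smul_right_injective Pt (inv_ne_zero (sgn_ne (hpos i j hij))) h'
  · rintro ⟨Q, hQinf, hQcomp, hQnc⟩
    refine ⟨(fun q => rOf lam q) '' Q, ?_, ?_, ?_⟩
    · refine hQinf.image ?_
      intro q₁ h₁ q₂ h₂ heq
      have heq' : rOf lam q₁ = rOf lam q₂ := heq
      funext e
      obtain ⟨i, j, hij, he⟩ := e.2
      rw [q_eq (hQcomp q₁ h₁) e hij he (hpos i j hij),
        q_eq (hQcomp q₂ h₂) e hij he (hpos i j hij), heq']
    · rintro ρ ⟨q, hq, rfl⟩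
      intro i j hij
      have he := rOf_edge (hQcomp q hq) hij
      rw [dist_eq_norm,
        show rOf lam q i - rOf lam q j = -(uvec lam q i j hij) by rw [← he]; abel,
        norm_neg]
      unfold uvec
      rw [norm_smul, (hQcomp q hq).1 (oe i j hij), Real.norm_eq_abs,
        abs_sgn (hpos i j hij), mul_one]
    · rintro ρ₁ ⟨q₁, hq₁, rfl⟩ ρ₂ ⟨q₂, hq₂, rfl⟩ hne ⟨σ, hσ₀⟩
      have hσ : ∀ i ∈ octV, rOf lam q₁ i = σ (rOf lam q₂ i) := hσ₀
      have hqne : q₁ ≠ q₂ := fun hh => hne (by rw [hh])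
      apply hQnc q₁ hq₁ q₂ hq₂ hqne
      set A := σ.toRealAffineIsometryEquiv.linearIsometryEquiv with hAdef
      have hdiff : ∀ i j, IsOctEdge i j →
          rOf lam q₁ j - rOf lam q₁ i = A (rOf lam q₂ j - rOf lam q₂ i) := by
        intro i j hij
        rw [hσ j hij.2.1, hσ i hij.1]
        exact isometry_sub σ _ _
      refine ⟨A.symm, fun e => ?_⟩
      obtain ⟨i, j, hij, he⟩ := e.2
      rw [q_eq (hQcomp q₂ hq₂) e hij he (hpos i j hij),
        q_eq (hQcomp q₁ hq₁) e hij he (hpos i j hij),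
        hdiff i j hij, map_smul, LinearIsometryEquiv.symm_apply_apply]
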